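/- Φ_{3,3,1} = 1/18; that is: (a) every n-vertex 3-partite 3-graph H (n ≥ 3) with no isolated vertices and with every vertex degree d_H(v) > n²/18 is uniquely 3-colorable, and (b) for every ε > 0 there exist arbitrarily large 3-partite 3-graphs without isolated vertices, on n vertices, with minimum vertex degree at least (1/18 - ε)n², that are not uniquely 3-colorable. -/

import Mathlib

set_option maxHeartbeats 1000000

theorem keyA (n A d e i w : ℝ)
  (hA : 0 ≤ A) (hd : 0 ≤ d) (he : 0 ≤ e) (hi : 0 ≤ i) (hw : 0 ≤ w)
  (hsum : A+d+e+i+w = n)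
  (hα : n^2 < 18*(e*A))
  (hδ : 4*n^2 < 18*((A+2*d)*i) + 9*w^2) : False := by
  have hn : 0 < n := by nlinarith
  have h2 : 16*n^2 < 9*(A+2*(d+i+w))^2 := by
    nlinarith [sq_nonneg (A+2*d-2*i), mul_nonneg hw (by positivity : (0:ℝ) ≤ A+2*d+2*i)]
  have key : 4*n < 3*(A+2*(d+i+w)) := by
    nlinarith [mul_pos hn hn, sq_nonneg (3*(A+2*(d+i+w)) + 4*n)]
  nlinarith [sq_nonneg (3*A-6*e)]

theorem keyB1 (n r1 r2 r3 q : ℝ)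
  (h1 : 0 < r1) (h2 : 0 ≤ r2) (h3 : 0 ≤ r3) (hq : 0 < q)
  (hqr : q ≤ r3) (hsum : r1+r2+r3 = n)
  (hC : 2*n^2*r1 < n^2*(r3-2*q) + 18*q*r2*r1)
  (hIII : n^2 < 18*(r1*q)) (hII' : n^2 < 18*(r1*r2)) : False := by
  nlinarith [mul_pos h1 hq, mul_pos hq (mul_pos h1 h1), sq_nonneg (r1-q), sq_nonneg (r2-q), sq_nonneg (n-3*r1), mul_nonneg (mul_nonneg h2 h3) h1.le, mul_pos h1 h1, sq_nonneg (r1+q-r2), mul_nonneg (sub_nonneg.2 hqr) h1.le, mul_nonneg (sub_nonneg.2 hqr) h2]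

theorem keyB (n r1 r2 r3 p q : ℝ)
  (h1 : 0 ≤ r1) (h2 : 0 ≤ r2) (h3 : 0 ≤ r3) (hp : 0 ≤ p) (hq : 0 ≤ q)
  (hpr : p ≤ r2) (hqr : q ≤ r3) (hsum : r1+r2+r3 = n)
  (hI : 2*n^2 < 18*((r3-q)*p + (r2-p)*q))
  (hII : n^2 < 18*(r1*p)) (hIII : n^2 < 18*(r1*q)) : False := by
  have hn : 0 ≤ n := by linarith
  have hr1 : 0 < r1 := by
    rcases eq_or_lt_of_le h1 with h | h
    · nlinarith
    · exact h
  have hpp : 0 < p := by nlinarith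
  have hqq : 0 < q := by nlinarith
  rcases le_or_gt (2*q) r3 with hq3 | hq3
  · rcases le_or_gt (2*p) r2 with hp2 | hp2
    · nlinarith [sq_nonneg (r1-r2), sq_nonneg (r1-r3), sq_nonneg (r2-r3),
        mul_nonneg (sub_nonneg.2 hq3) hr1.le, mul_nonneg (sub_nonneg.2 hp2) hr1.le,
        mul_nonneg (sub_nonneg.2 hq3) hp, mul_nonneg (sub_nonneg.2 hp2) hq]
    · have hC : 2*n^2*r1 < n^2*(r2-2*p) + 18*p*r3*r1 := by
        nlinarith [mul_le_mul_of_nonpos_right (le_of_lt hIII) (by linarith : r2-2*p ≤ 0)]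
      exact keyB1 n r1 r3 r2 p hr1 h3 h2 hpp hpr (by linarith) hC hII
        (by nlinarith [mul_nonneg (sub_nonneg.2 hqr) hr1.le])
  · have hC : 2*n^2*r1 < n^2*(r3-2*q) + 18*q*r2*r1 := by
      nlinarith [mul_le_mul_of_nonpos_right (le_of_lt hII) (by linarith : r3-2*q ≤ 0)]
    exact keyB1 n r1 r2 r3 q hr1 h2 h3 hqq hqr (by linarith) hC hIII
      (by nlinarith [mul_nonneg (sub_nonneg.2 hpr) hr1.le])

theorem chainA (n a b c d e f g h i : ℝ)
  (ha : 0 ≤ a) (hb : 0 ≤ b) (hc : 0 ≤ c) (hd : 0 ≤ d) (he : 0 ≤ e)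
  (hf : 0 ≤ f) (hg : 0 ≤ g) (hh : 0 ≤ h) (hi : 0 ≤ i)
  (hsum : a+b+c+d+e+f+g+h+i = n)
  (h11 : n^2 < 18*(e*i+f*h)) (h12 : n^2 < 18*(d*i+f*g))
  (h21 : n^2 < 18*(b*i+c*h)) (h22 : n^2 < 18*(a*i+c*g))
  (h33 : n^2 < 18*(a*e+b*d)) : False := by
  rcases le_total d e with hde | hde
  · apply keyA n (a+b) d e i (c+f+(g+h)) (by linarith) hd he hi (by linarith) (by linarith)
      (by nlinarith [mul_nonneg hb (sub_nonneg.2 hde)])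
    -- 4n² < 18(A+2d)i + 9w² from h21+h22+2*h12 relaxed
    nlinarith [mul_nonneg hc hg, mul_nonneg hc hh, mul_nonneg hf hg, mul_nonneg hf hh,
      sq_nonneg (c+f-(g+h)), mul_nonneg hf hg]
  · apply keyA n (a+b) e d i (c+f+(g+h)) (by linarith) he hd hi (by linarith) (by linarith)
      (by nlinarith [mul_nonneg ha (sub_nonneg.2 hde)])
    nlinarith [mul_nonneg hc hg, mul_nonneg hc hh, mul_nonneg hf hg, mul_nonneg hf hh,
      sq_nonneg (c+f-(g+h))]

theorem chainB (n a b c d e f g h i : ℝ)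
  (ha : 0 ≤ a) (hb : 0 ≤ b) (hc : 0 ≤ c) (hd : 0 ≤ d) (he : 0 ≤ e)
  (hf : 0 ≤ f) (hg : 0 ≤ g) (hh : 0 ≤ h) (hi : 0 ≤ i)
  (hsum : a+b+c+d+e+f+g+h+i = n)
  (h11 : n^2 < 18*(e*i+f*h)) (h12 : n^2 < 18*(d*i+f*g))
  (h33 : n^2 < 18*(a*e+b*d)) (h23 : n^2 < 18*(a*h+b*g)) : False := by
  apply keyB n (a+b+c) (d+e+f) (g+h+i) (d+e) (g+h)
    (by linarith) (by linarith) (by linarith) (by linarith) (by linarith)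
    (by linarith) (by linarith) (by linarith)
  · nlinarith
  · nlinarith [mul_nonneg ha hd, mul_nonneg hb he, mul_nonneg hc hd, mul_nonneg hc he,
      mul_nonneg ha hh, mul_nonneg hb hg]
  · nlinarith [mul_nonneg ha hg, mul_nonneg hb hh, mul_nonneg hc hg, mul_nonneg hc hh]

private theorem posmul {x y : ℝ} (hx : 0 ≤ x) (hy : 0 ≤ y) (hxy : 0 < x*y) :
    0 < x ∧ 0 < y := by
  constructor
  · rcases eq_or_lt_of_le hx with h | h
    · exfalso; rw [← h] at hxy; simp at hxy
    · exact h
  · rcases eq_or_lt_of_le hy with h | h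
    · exfalso; rw [← h] at hxy; simp at hxy
    · exact h

theorem core9 (n a b c d e f g h i : ℝ)
  (ha : 0 ≤ a) (hb : 0 ≤ b) (hc : 0 ≤ c) (hd : 0 ≤ d) (he : 0 ≤ e)
  (hf : 0 ≤ f) (hg : 0 ≤ g) (hh : 0 ≤ h) (hi : 0 ≤ i)
  (hsum : a+b+c+d+e+f+g+h+i = n)
  (H11 : n^2 < 18*(e*i+f*h)) (H12 : n^2 < 18*(d*i+f*g))
  (H21 : 0 < d → n^2 < 18*(b*i+c*h)) (H22 : 0 < e → n^2 < 18*(a*i+c*g))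
  (H23 : 0 < f → n^2 < 18*(a*h+b*g)) (H31 : 0 < g → n^2 < 18*(b*f+c*e))
  (H32 : 0 < h → n^2 < 18*(a*f+c*d)) (H33 : 0 < i → n^2 < 18*(a*e+b*d)) : False := by
  have hn2 : (0:ℝ) ≤ n^2 := sq_nonneg n
  have d1 : 0 < e*i ∨ 0 < f*h := by
    by_contra hcon
    push_neg at hcon
    obtain ⟨p1, p2⟩ := hcon
    linarith
  rcases d1 with hei | hfh
  · obtain ⟨he', hi'⟩ := posmul he hi hei
    by_cases hf' : 0 < f
    · exact chainB n a b c d e f g h i ha hb hc hd he hf hg hh hi hsum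
        H11 H12 (H33 hi') (H23 hf')
    · have hf0 : f = 0 := le_antisymm (not_lt.1 hf') hf
      have hdi : 0 < d*i := by
        by_contra hcon
        push_neg at hcon
        rw [hf0] at H12
        nlinarith
      obtain ⟨hd', _⟩ := posmul hd hi hdi
      exact chainA n a b c d e f g h i ha hb hc hd he hf hg hh hi hsum
        H11 H12 (H21 hd') (H22 he') (H33 hi')
  · obtain ⟨hf', hh'⟩ := posmul hf hh hfh
    by_cases hi' : 0 < i
    · exact chainB n a b c d e f g h i ha hb hc hd he hf hg hh hi hsum
        H11 H12 (H33 hi') (H23 hf')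
    · have hi0 : i = 0 := le_antisymm (not_lt.1 hi') hi
      have hfg : 0 < f*g := by
        by_contra hcon
        push_neg at hcon
        rw [hi0] at H12
        nlinarith
      obtain ⟨_, hg'⟩ := posmul hf hg hfg
      apply chainA n a b c g h i d e f ha hb hc hg hh hi hd he hf (by linarith)
      · calc n^2 < 18*(e*i+f*h) := H11
          _ = 18*(h*f+i*e) := by ring
      · calc n^2 < 18*(d*i+f*g) := H12
          _ = 18*(g*f+i*d) := by ring
      · calc n^2 < 18*(b*f+c*e) := H31 hg'
          _ = 18*(b*f+c*e) := by ring
      · exact H32 hh'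
      · calc n^2 < 18*(a*h+b*g) := H23 hf'
          _ = 18*(a*h+b*g) := by ring

private theorem sum9 (r j j' : Fin 3) (hjj : j ≠ j') (M : Fin 3 → Fin 3 → ℕ) :
    (M r j + M r j' + M r (-(j+j'))) + (M (r+1) j + M (r+1) j' + M (r+1) (-(j+j'))) +
      (M (r+2) j + M (r+2) j' + M (r+2) (-(j+j'))) =
    ∑ u : Fin 3, ∑ v : Fin 3, M u v := by
  have e1 : (-1 : Fin 3) = 2 := by decide
  have e2 : (-2 : Fin 3) = 1 := by decide
  fin_cases r <;> fin_cases j <;> fin_cases j' <;>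
    simp_all [Fin.sum_univ_three, e1, e2] <;> ring

private theorem total_card {n : ℕ} (φ θ : Fin n → Fin 3) :
    ∑ u : Fin 3, ∑ v : Fin 3,
      (Finset.univ.filter (fun x => φ x = u ∧ θ x = v)).card = n := by
  classical
  have h := Finset.card_eq_sum_card_fiberwise
    (f := fun x : Fin n => (φ x, θ x)) (s := Finset.univ) (t := Finset.univ)
    (fun x _ => Finset.mem_univ _)
  rw [Finset.card_univ, Fintype.card_fin] at h
  rw [← Fintype.sum_prod_type']
  refine Eq.trans ?_ h.symm
  apply Finset.sum_congr rfl
  intro p _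
  congr 1
  ext x
  simp [Prod.ext_iff]

private theorem fin3_cases : ∀ p q r : Fin 3, p ≠ q → p ≠ r → q ≠ r →
    (q = p+1 ∧ r = p+2) ∨ (q = p+2 ∧ r = p+1) := by decide

private theorem edge_struct {n : ℕ} (E : Finset (Fin n)) (hE : E.card = 3)
    (φ θ : Fin n → Fin 3) (hφ : Set.InjOn φ E) (hθ : Set.InjOn θ E)
    (v : Fin n) (hv : v ∈ E) :
    ∃ y z : Fin n, E = {v, y, z} ∧ φ y = φ v + 1 ∧ φ z = φ v + 2 ∧
      ((θ y = θ v + 1 ∧ θ z = θ v + 2) ∨ (θ y = θ v + 2 ∧ θ z = θ v + 1)) := by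
  obtain ⟨x1, x2, x3, h12, h13, h23, rfl⟩ := Finset.card_eq_three.mp hE
  have hmem : ∀ w : Fin n, w ∈ ({x1, x2, x3} : Finset (Fin n)) ↔ w = x1 ∨ w = x2 ∨ w = x3 := by
    intro w; simp [Finset.mem_insert]
  -- get u w such that E = {v, u, w}
  obtain ⟨u, w, huw, hvu, hvw, hEuw⟩ :
      ∃ u w : Fin n, u ≠ w ∧ v ≠ u ∧ v ≠ w ∧
        ({x1, x2, x3} : Finset (Fin n)) = {v, u, w} := by
    rcases (hmem v).mp hv with rfl | rfl | rfl
    · exact ⟨x2, x3, h23, h12, h13, rfl⟩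
    · exact ⟨x1, x3, h13, fun h => h12 h.symm, h23, by ext t; simp [hmem]; tauto⟩
    · exact ⟨x1, x2, h12, fun h => h13 h.symm, fun h => h23 h.symm, by ext t; simp [hmem]; tauto⟩
  rw [hEuw] at hφ hθ hv ⊢
  have memv : v ∈ ({v, u, w} : Finset (Fin n)) := by simp
  have memu : u ∈ ({v, u, w} : Finset (Fin n)) := by simp
  have memw : w ∈ ({v, u, w} : Finset (Fin n)) := by simp
  have hφvu : φ v ≠ φ u := fun h => hvu (hφ memv memu h)
  have hφvw : φ v ≠ φ w := fun h => hvw (hφ memv memw h)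
  have hφuw : φ u ≠ φ w := fun h => huw (hφ memu memw h)
  have hθvu : θ v ≠ θ u := fun h => hvu (hθ memv memu h)
  have hθvw : θ v ≠ θ w := fun h => hvw (hθ memv memw h)
  have hθuw : θ u ≠ θ w := fun h => huw (hθ memu memw h)
  rcases fin3_cases (φ v) (φ u) (φ w) hφvu hφvw hφuw with ⟨hu1, hw1⟩ | ⟨hu1, hw1⟩
  · exact ⟨u, w, rfl, hu1, hw1, fin3_cases (θ v) (θ u) (θ w) hθvu hθvw hθuw⟩
  · refine ⟨w, u, by ext t; simp; tauto, hw1, hu1, ?_⟩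
    rcases fin3_cases (θ v) (θ w) (θ u) hθvw hθvu (fun h => hθuw h.symm) with h | h
    · exact Or.inl h
    · exact Or.inr h

private theorem deg_bound {n : ℕ} (H : Finset (Finset (Fin n)))
    (hcard : ∀ E ∈ H, E.card = 3)
    (φ θ : Fin n → Fin 3) (hφ : ∀ E ∈ H, Set.InjOn φ E) (hθ : ∀ E ∈ H, Set.InjOn θ E)
    (v : Fin n) :
    (H.filter (fun E => v ∈ E)).card ≤
      (Finset.univ.filter (fun x => φ x = φ v + 1 ∧ θ x = θ v + 1)).card *
        (Finset.univ.filter (fun x => φ x = φ v + 2 ∧ θ x = θ v + 2)).card +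
      (Finset.univ.filter (fun x => φ x = φ v + 1 ∧ θ x = θ v + 2)).card *
        (Finset.univ.filter (fun x => φ x = φ v + 2 ∧ θ x = θ v + 1)).card := by
  classical
  set S : Fin 3 → Fin 3 → Finset (Fin n) :=
    fun i j => Finset.univ.filter (fun x => φ x = i ∧ θ x = j) with hS
  set T : Finset (Fin n × Fin n) :=
    (S (φ v + 1) (θ v + 1) ×ˢ S (φ v + 2) (θ v + 2)) ∪
    (S (φ v + 1) (θ v + 2) ×ˢ S (φ v + 2) (θ v + 1)) with hT
  have key : (H.filter (fun E => v ∈ E)).card ≤ T.card := by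
    apply Finset.card_le_card_of_injOn
      (fun E => ((if h : ∃ y ∈ E, φ y = φ v + 1 then h.choose else v),
                 (if h : ∃ z ∈ E, φ z = φ v + 2 then h.choose else v)))
    · intro E hE
      rw [Finset.mem_coe, Finset.mem_filter] at hE
      obtain ⟨hEH, hvE⟩ := hE
      obtain ⟨y, z, hEyz, hφy, hφz, hθs⟩ :=
        edge_struct E (hcard E hEH) φ θ (hφ E hEH) (hθ E hEH) v hvE
      have hyE : y ∈ E := by rw [hEyz]; simp
      have hzE : z ∈ E := by rw [hEyz]; simp
      have f3a : ∀ p : Fin 3, p ≠ p + 1 := by decide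
      have f3b : ∀ p : Fin 3, p ≠ p + 2 := by decide
      have f3c : ∀ p : Fin 3, p + 1 ≠ p + 2 := by decide
      have huniq1 : ∀ w' ∈ E, φ w' = φ v + 1 → w' = y := by
        intro w' hw' hφw'
        rw [hEyz] at hw'
        rcases Finset.mem_insert.mp hw' with rfl | hw'
        · exact absurd hφw' (f3a _)
        · rcases Finset.mem_insert.mp hw' with rfl | hw'
          · rfl
          · rw [Finset.mem_singleton] at hw'; subst hw'
            rw [hφz] at hφw'; exact absurd hφw'.symm (f3c _)
      have huniq2 : ∀ w' ∈ E, φ w' = φ v + 2 → w' = z := by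
        intro w' hw' hφw'
        rw [hEyz] at hw'
        rcases Finset.mem_insert.mp hw' with rfl | hw'
        · exact absurd hφw' (f3b _)
        · rcases Finset.mem_insert.mp hw' with rfl | hw'
          · rw [hφy] at hφw'; exact absurd hφw' (f3c _)
          · rw [Finset.mem_singleton] at hw'; exact hw'
      have he1 : (if h : ∃ y ∈ E, φ y = φ v + 1 then h.choose else v) = y := by
        rw [dif_pos ⟨y, hyE, hφy⟩]
        have hch := (⟨y, hyE, hφy⟩ : ∃ y ∈ E, φ y = φ v + 1).choose_spec
        exact huniq1 _ hch.1 hch.2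
      have he2 : (if h : ∃ z ∈ E, φ z = φ v + 2 then h.choose else v) = z := by
        rw [dif_pos ⟨z, hzE, hφz⟩]
        have hch := (⟨z, hzE, hφz⟩ : ∃ z ∈ E, φ z = φ v + 2).choose_spec
        exact huniq2 _ hch.1 hch.2
      simp only [Finset.mem_coe]
      rw [he1, he2, hT]
      rcases hθs with ⟨ht1, ht2⟩ | ⟨ht1, ht2⟩
      · apply Finset.mem_union_left
        rw [Finset.mem_product]
        exact ⟨by simp [hS, hφy, ht1], by simp [hS, hφz, ht2]⟩
      · apply Finset.mem_union_right
        rw [Finset.mem_product]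
        exact ⟨by simp [hS, hφy, ht1], by simp [hS, hφz, ht2]⟩
    · intro E hE E' hE' hff
      simp only [Finset.coe_filter, Set.mem_setOf_eq] at hE hE'
      obtain ⟨hEH, hvE⟩ := hE
      obtain ⟨hE'H, hvE'⟩ := hE'
      obtain ⟨y, z, hEyz, hφy, hφz, _⟩ :=
        edge_struct E (hcard E hEH) φ θ (hφ E hEH) (hθ E hEH) v hvE
      obtain ⟨y', z', hEyz', hφy', hφz', _⟩ :=
        edge_struct E' (hcard E' hE'H) φ θ (hφ E' hE'H) (hθ E' hE'H) v hvE'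
      have hyE : y ∈ E := by rw [hEyz]; simp
      have hzE : z ∈ E := by rw [hEyz]; simp
      have hyE' : y' ∈ E' := by rw [hEyz']; simp
      have hzE' : z' ∈ E' := by rw [hEyz']; simp
      have f3a : ∀ p : Fin 3, p ≠ p + 1 := by decide
      have f3b : ∀ p : Fin 3, p ≠ p + 2 := by decide
      have f3c : ∀ p : Fin 3, p + 1 ≠ p + 2 := by decide
      have huniq1 : ∀ w' ∈ E, φ w' = φ v + 1 → w' = y := by
        intro w' hw' hφw'
        rw [hEyz] at hw'
        rcases Finset.mem_insert.mp hw' with rfl | hw'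
        · exact absurd hφw' (f3a _)
        · rcases Finset.mem_insert.mp hw' with rfl | hw'
          · rfl
          · rw [Finset.mem_singleton] at hw'; subst hw'
            rw [hφz] at hφw'; exact absurd hφw'.symm (f3c _)
      have huniq2 : ∀ w' ∈ E, φ w' = φ v + 2 → w' = z := by
        intro w' hw' hφw'
        rw [hEyz] at hw'
        rcases Finset.mem_insert.mp hw' with rfl | hw'
        · exact absurd hφw' (f3b _)
        · rcases Finset.mem_insert.mp hw' with rfl | hw'
          · rw [hφy] at hφw'; exact absurd hφw' (f3c _)
          · rw [Finset.mem_singleton] at hw'; exact hw'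
      have huniq1' : ∀ w' ∈ E', φ w' = φ v + 1 → w' = y' := by
        intro w' hw' hφw'
        rw [hEyz'] at hw'
        rcases Finset.mem_insert.mp hw' with rfl | hw'
        · exact absurd hφw' (f3a _)
        · rcases Finset.mem_insert.mp hw' with rfl | hw'
          · rfl
          · rw [Finset.mem_singleton] at hw'; subst hw'
            rw [hφz'] at hφw'; exact absurd hφw'.symm (f3c _)
      have huniq2' : ∀ w' ∈ E', φ w' = φ v + 2 → w' = z' := by
        intro w' hw' hφw'
        rw [hEyz'] at hw'
        rcases Finset.mem_insert.mp hw' with rfl | hw'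
        · exact absurd hφw' (f3b _)
        · rcases Finset.mem_insert.mp hw' with rfl | hw'
          · rw [hφy'] at hφw'; exact absurd hφw' (f3c _)
          · rw [Finset.mem_singleton] at hw'; exact hw'
      have he1 : (if h : ∃ y ∈ E, φ y = φ v + 1 then h.choose else v) = y := by
        rw [dif_pos ⟨y, hyE, hφy⟩]
        have hch := (⟨y, hyE, hφy⟩ : ∃ y ∈ E, φ y = φ v + 1).choose_spec
        exact huniq1 _ hch.1 hch.2
      have he2 : (if h : ∃ z ∈ E, φ z = φ v + 2 then h.choose else v) = z := by
        rw [dif_pos ⟨z, hzE, hφz⟩]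
        have hch := (⟨z, hzE, hφz⟩ : ∃ z ∈ E, φ z = φ v + 2).choose_spec
        exact huniq2 _ hch.1 hch.2
      have he1' : (if h : ∃ y ∈ E', φ y = φ v + 1 then h.choose else v) = y' := by
        rw [dif_pos ⟨y', hyE', hφy'⟩]
        have hch := (⟨y', hyE', hφy'⟩ : ∃ y ∈ E', φ y = φ v + 1).choose_spec
        exact huniq1' _ hch.1 hch.2
      have he2' : (if h : ∃ z ∈ E', φ z = φ v + 2 then h.choose else v) = z' := by
        rw [dif_pos ⟨z', hzE', hφz'⟩]
        have hch := (⟨z', hzE', hφz'⟩ : ∃ z ∈ E', φ z = φ v + 2).choose_spec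
        exact huniq2' _ hch.1 hch.2
      rw [Prod.mk.injEq, he1, he2, he1', he2'] at hff
      rw [hEyz, hEyz', hff.1, hff.2]
  calc (H.filter (fun E => v ∈ E)).card ≤ T.card := key
    _ ≤ (S (φ v + 1) (θ v + 1) ×ˢ S (φ v + 2) (θ v + 2)).card +
        (S (φ v + 1) (θ v + 2) ×ˢ S (φ v + 2) (θ v + 1)).card := Finset.card_union_le _ _
    _ = _ := by rw [Finset.card_product, Finset.card_product]

private theorem claimCore {n : ℕ} (N : Fin 3 → Fin 3 → ℕ)
    (degpos : ∀ row col : Fin 3, 0 < N row col →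
      (n:ℝ)^2 < 18*((N (row+1) (col+1) : ℝ) * (N (row+2) (col+2) : ℝ) +
        (N (row+1) (col+2) : ℝ) * (N (row+2) (col+1) : ℝ)))
    (htot : ∑ u : Fin 3, ∑ v : Fin 3, N u v = n)
    (r j j' : Fin 3) (hjj : j ≠ j') (ha : 0 < N r j) (hb : 0 < N r j') : False := by
  have f1 : ∀ x : Fin 3, x + 1 + 1 = x + 2 := by decide
  have f2 : ∀ x : Fin 3, x + 1 + 2 = x := by decide
  have f3 : ∀ x : Fin 3, x + 2 + 1 = x := by decide
  have f4 : ∀ x : Fin 3, x + 2 + 2 = x + 1 := by decide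
  have hsum := sum9 r j j' hjj N
  rw [htot] at hsum
  have hpair : (j' = j + 1 ∧ -(j + j') = j + 2) ∨ (j' = j + 2 ∧ -(j + j') = j + 1) := by
    have : ∀ a b : Fin 3, a ≠ b → (b = a + 1 ∧ -(a + b) = a + 2) ∨ (b = a + 2 ∧ -(a + b) = a + 1) := by decide
    exact this j j' hjj
  rcases hpair with ⟨h1, h2⟩ | ⟨h1, h2⟩
  · subst h1
    rw [h2] at hsum
    have hsumR : ((N r j : ℝ) + N r (j+1) + N r (j+2)) + (N (r+1) j + N (r+1) (j+1) + N (r+1) (j+2))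
        + (N (r+2) j + N (r+2) (j+1) + N (r+2) (j+2)) = (n:ℝ) := by exact_mod_cast hsum
    apply core9 (n:ℝ) (N r j) (N r (j+1)) (N r (j+2)) (N (r+1) j) (N (r+1) (j+1)) (N (r+1) (j+2))
      (N (r+2) j) (N (r+2) (j+1)) (N (r+2) (j+2))
      (Nat.cast_nonneg _) (Nat.cast_nonneg _) (Nat.cast_nonneg _) (Nat.cast_nonneg _)
      (Nat.cast_nonneg _) (Nat.cast_nonneg _) (Nat.cast_nonneg _) (Nat.cast_nonneg _)
      (Nat.cast_nonneg _) (by linarith)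
    · have hx := degpos r j ha; linarith [hx]
    · have hx := degpos r (j+1) hb; simp only [f1, f2, f3, f4] at hx; linarith [hx]
    · intro hp
      have hx := degpos (r+1) j (by exact_mod_cast hp); simp only [f1, f2, f3, f4] at hx; linarith [hx]
    · intro hp
      have hx := degpos (r+1) (j+1) (by exact_mod_cast hp); simp only [f1, f2, f3, f4] at hx; linarith [hx]
    · intro hp
      have hx := degpos (r+1) (j+2) (by exact_mod_cast hp); simp only [f1, f2, f3, f4] at hx; linarith [hx]
    · intro hp
      have hx := degpos (r+2) j (by exact_mod_cast hp); simp only [f1, f2, f3, f4] at hx; linarith [hx]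
    · intro hp
      have hx := degpos (r+2) (j+1) (by exact_mod_cast hp); simp only [f1, f2, f3, f4] at hx; linarith [hx]
    · intro hp
      have hx := degpos (r+2) (j+2) (by exact_mod_cast hp); simp only [f1, f2, f3, f4] at hx; linarith [hx]
  · subst h1
    rw [h2] at hsum
    have hsumR : ((N r j : ℝ) + N r (j+2) + N r (j+1)) + (N (r+1) j + N (r+1) (j+2) + N (r+1) (j+1))
        + (N (r+2) j + N (r+2) (j+2) + N (r+2) (j+1)) = (n:ℝ) := by exact_mod_cast hsum
    apply core9 (n:ℝ) (N r j) (N r (j+2)) (N r (j+1)) (N (r+1) j) (N (r+1) (j+2)) (N (r+1) (j+1))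
      (N (r+2) j) (N (r+2) (j+2)) (N (r+2) (j+1))
      (Nat.cast_nonneg _) (Nat.cast_nonneg _) (Nat.cast_nonneg _) (Nat.cast_nonneg _)
      (Nat.cast_nonneg _) (Nat.cast_nonneg _) (Nat.cast_nonneg _) (Nat.cast_nonneg _)
      (Nat.cast_nonneg _) (by linarith)
    · have hx := degpos r j ha; linarith [hx]
    · have hx := degpos r (j+2) hb; simp only [f1, f2, f3, f4] at hx; linarith [hx]
    · intro hp
      have hx := degpos (r+1) j (by exact_mod_cast hp); simp only [f1, f2, f3, f4] at hx; linarith [hx]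
    · intro hp
      have hx := degpos (r+1) (j+2) (by exact_mod_cast hp); simp only [f1, f2, f3, f4] at hx; linarith [hx]
    · intro hp
      have hx := degpos (r+1) (j+1) (by exact_mod_cast hp); simp only [f1, f2, f3, f4] at hx; linarith [hx]
    · intro hp
      have hx := degpos (r+2) j (by exact_mod_cast hp); simp only [f1, f2, f3, f4] at hx; linarith [hx]
    · intro hp
      have hx := degpos (r+2) (j+2) (by exact_mod_cast hp); simp only [f1, f2, f3, f4] at hx; linarith [hx]
    · intro hp
      have hx := degpos (r+2) (j+1) (by exact_mod_cast hp); simp only [f1, f2, f3, f4] at hx; linarith [hx]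

theorem partA (n : ℕ) (hn : 3 ≤ n) (H : Finset (Finset (Fin n)))
    (hcard : ∀ E ∈ H, E.card = 3)
    (hcover : ∀ x : Fin n, ∃ E ∈ H, x ∈ E)
    (hdeg : ∀ x : Fin n, (n : ℝ) ^ 2 / 18 < ((H.filter (fun E => x ∈ E)).card : ℝ))
    (φ θ : Fin n → Fin 3) (hφ : ∀ E ∈ H, Set.InjOn φ E) (hθ : ∀ E ∈ H, Set.InjOn θ E) :
    ∃ η : Equiv.Perm (Fin 3), η ∘ φ = θ := by
  classical
  let N : Fin 3 → Fin 3 → ℕ :=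
    fun i j => (Finset.univ.filter (fun x => φ x = i ∧ θ x = j)).card
  have degpos : ∀ row col : Fin 3, 0 < N row col →
      (n:ℝ)^2 < 18*((N (row+1) (col+1) : ℝ) * (N (row+2) (col+2) : ℝ) +
        (N (row+1) (col+2) : ℝ) * (N (row+2) (col+1) : ℝ)) := by
    intro row col hpos
    obtain ⟨v, hv⟩ := Finset.card_pos.mp hpos
    rw [Finset.mem_filter] at hv
    obtain ⟨-, hv1, hv2⟩ := hv
    have hb := deg_bound H hcard φ θ hφ hθ v
    rw [hv1, hv2] at hb
    have hd := hdeg v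
    have hcast : ((H.filter (fun E => v ∈ E)).card : ℝ) ≤
        (N (row+1) (col+1) : ℝ) * (N (row+2) (col+2) : ℝ) +
        (N (row+1) (col+2) : ℝ) * (N (row+2) (col+1) : ℝ) := by
      exact_mod_cast hb
    linarith
  have htot : ∑ u : Fin 3, ∑ v : Fin 3, N u v = n := total_card φ θ
  -- θ is determined by φ
  have claim : ∀ u w : Fin n, φ u = φ w → θ u = θ w := by
    intro u w huw
    by_contra hne
    apply claimCore N degpos htot (φ u) (θ u) (θ w) hne
    · apply Finset.card_pos.mpr
      exact ⟨u, by simp [Finset.mem_filter]⟩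
    · apply Finset.card_pos.mpr
      exact ⟨w, by simp [Finset.mem_filter, huw]⟩
  -- φ is "surjective" via an edge
  have hsurj : ∀ i : Fin 3, ∃ v : Fin n, φ v = i := by
    have x0 : Fin n := ⟨0, by omega⟩
    obtain ⟨E, hEH, hx0⟩ := hcover x0
    obtain ⟨x1, x2, x3, h12, h13, h23, hE3⟩ := Finset.card_eq_three.mp (hcard E hEH)
    have m1 : x1 ∈ E := by rw [hE3]; simp
    have m2 : x2 ∈ E := by rw [hE3]; simp
    have m3 : x3 ∈ E := by rw [hE3]; simp
    have d12 : φ x1 ≠ φ x2 := fun h => h12 (hφ E hEH m1 m2 h)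
    have d13 : φ x1 ≠ φ x3 := fun h => h13 (hφ E hEH m1 m3 h)
    have d23 : φ x2 ≠ φ x3 := fun h => h23 (hφ E hEH m2 m3 h)
    intro i
    have : ∀ p q s i : Fin 3, p ≠ q → p ≠ s → q ≠ s → i = p ∨ i = q ∨ i = s := by decide
    rcases this (φ x1) (φ x2) (φ x3) i d12 d13 d23 with h | h | h
    · exact ⟨x1, h.symm⟩
    · exact ⟨x2, h.symm⟩
    · exact ⟨x3, h.symm⟩
  -- define the color map
  let η0 : Fin 3 → Fin 3 := fun i => θ (hsurj i).choose
  have hη0 : ∀ v : Fin n, η0 (φ v) = θ v := by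
    intro v
    exact claim (hsurj (φ v)).choose v (hsurj (φ v)).choose_spec
  have hinj : Function.Injective η0 := by
    intro i i' hii
    by_contra hne
    -- two distinct rows i, i' share the column t := η0 i
    set u := (hsurj i).choose with hu
    set u' := (hsurj i').choose with hu'
    have hφu : φ u = i := (hsurj i).choose_spec
    have hφu' : φ u' = i' := (hsurj i').choose_spec
    have hθu' : θ u' = θ u := by
      have : η0 i' = θ u' := rfl
      have h2 : η0 i = θ u := rfl
      rw [← this, ← h2, hii]
    -- all vertices with φ = i' have θ = θ u
    have hrowi' : ∀ c : Fin 3, c ≠ θ u → N i' c = 0 := by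
      intro c hc
      by_contra hNc
      obtain ⟨v, hv⟩ := Finset.card_pos.mp (Nat.pos_of_ne_zero hNc)
      rw [Finset.mem_filter] at hv
      obtain ⟨-, hv1, hv2⟩ := hv
      have := claim v u' (by rw [hv1, hφu'])
      rw [hv2, hθu'] at this
      exact hc this
    have hNit : 0 < N i (θ u) := by
      apply Finset.card_pos.mpr
      exact ⟨u, by simp [Finset.mem_filter, hφu]⟩
    have hx := degpos i (θ u) hNit
    have hcases : i' = i + 1 ∨ i' = i + 2 := by
      have : ∀ a b : Fin 3, a ≠ b → b = a + 1 ∨ b = a + 2 := by decide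
      exact this i i' hne
    have fne1 : ∀ t : Fin 3, t + 1 ≠ t := by decide
    have fne2 : ∀ t : Fin 3, t + 2 ≠ t := by decide
    rcases hcases with rfl | rfl
    · rw [hrowi' (θ u + 1) (fne1 _), hrowi' (θ u + 2) (fne2 _)] at hx
      simp at hx
      nlinarith [sq_nonneg (n:ℝ), hx]
    · rw [hrowi' (θ u + 1) (fne1 _), hrowi' (θ u + 2) (fne2 _)] at hx
      simp at hx
      nlinarith [sq_nonneg (n:ℝ), hx]
  have hbij : Function.Bijective η0 := Finite.injective_iff_bijective.mp hinj
  refine ⟨Equiv.ofBijective η0 hbij, ?_⟩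
  funext v
  exact hη0 v

private theorem K_card {n lo hi : ℕ} (h1 : lo ≤ hi) (h2 : hi ≤ n) :
    (Finset.univ.filter (fun v : Fin n => lo ≤ (v:ℕ) ∧ (v:ℕ) < hi)).card = hi - lo := by
  rw [← Nat.card_Ico lo hi]
  refine Finset.card_bij' (fun v _ => (v:ℕ)) (fun t ht => ⟨t, ?_⟩) ?_ ?_ ?_ ?_
  · simp only [Finset.mem_Ico] at ht; omega
  · intro a ha; simp only [Finset.mem_filter] at ha; simp [Finset.mem_Ico]; omega
  · intro t ht; simp only [Finset.mem_Ico] at ht; simp; omega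
  · intro a _; rfl
  · intro t _; rfl

private theorem deg_lower {n : ℕ} (H : Finset (Finset (Fin n)))
    (φ θ : Fin n → Fin 3)
    (hH : ∀ E : Finset (Fin n), E.card = 3 →
      (∀ a ∈ E, ∀ b ∈ E, φ a = φ b → a = b) →
      (∀ a ∈ E, ∀ b ∈ E, θ a = θ b → a = b) → E ∈ H)
    (x : Fin n) (P : Finset (Fin n × Fin n)) (ρ1 ρ2 : Fin 3)
    (hρ1 : ρ1 ≠ φ x) (hρ2 : ρ2 ≠ φ x) (hρ12 : ρ1 ≠ ρ2)
    (hP : ∀ p ∈ P, φ p.1 = ρ1 ∧ φ p.2 = ρ2 ∧ θ p.1 ≠ θ x ∧ θ p.2 ≠ θ x ∧ θ p.1 ≠ θ p.2) :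
    P.card ≤ (H.filter (fun E => x ∈ E)).card := by
  classical
  apply Finset.card_le_card_of_injOn (fun p => ({x, p.1, p.2} : Finset (Fin n)))
  · intro p hp
    obtain ⟨h1, h2, h3, h4, h5⟩ := hP p hp
    have d1 : φ x ≠ φ p.1 := by rw [h1]; exact fun h => hρ1 h.symm
    have d2 : φ x ≠ φ p.2 := by rw [h2]; exact fun h => hρ2 h.symm
    have d3 : φ p.1 ≠ φ p.2 := by rw [h1, h2]; exact hρ12
    have hx1 : x ≠ p.1 := fun h => d1 (by rw [h])
    have hx2 : x ≠ p.2 := fun h => d2 (by rw [h])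
    have h12 : p.1 ≠ p.2 := fun h => d3 (by rw [h])
    have hcard3 : ({x, p.1, p.2} : Finset (Fin n)).card = 3 := by
      rw [Finset.card_insert_of_notMem (by simp [hx1, hx2]),
        Finset.card_insert_of_notMem (by simp [h12]), Finset.card_singleton]
    rw [Finset.mem_coe, Finset.mem_filter]
    refine ⟨hH _ hcard3 ?_ ?_, by simp⟩
    · intro a ha b hb hab
      simp only [Finset.mem_insert, Finset.mem_singleton] at ha hb
      rcases ha with rfl|rfl|rfl <;> rcases hb with rfl|rfl|rfl <;>
        first
        | rfl
        | (exact absurd hab d1)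
        | (exact absurd hab.symm d1)
        | (exact absurd hab d2)
        | (exact absurd hab.symm d2)
        | (exact absurd hab d3)
        | (exact absurd hab.symm d3)
    · intro a ha b hb hab
      simp only [Finset.mem_insert, Finset.mem_singleton] at ha hb
      rcases ha with rfl|rfl|rfl <;> rcases hb with rfl|rfl|rfl <;>
        first
        | rfl
        | (exact absurd hab.symm h3)
        | (exact absurd hab.symm h4)
        | (exact absurd hab h3)
        | (exact absurd hab h4)
        | (exact absurd hab h5)
        | (exact absurd hab.symm h5)
  · intro p hp q hq hpq
    simp only [Finset.mem_coe] at hp hq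
    obtain ⟨hp1, hp2, -, -, -⟩ := hP p hp
    obtain ⟨hq1, hq2, -, -, -⟩ := hP q hq
    have hpq' : ({x, p.1, p.2} : Finset (Fin n)) = {x, q.1, q.2} := hpq
    have hmem1 : q.1 ∈ ({x, p.1, p.2} : Finset (Fin n)) := by rw [hpq']; simp
    have hmem2 : q.2 ∈ ({x, p.1, p.2} : Finset (Fin n)) := by rw [hpq']; simp
    simp only [Finset.mem_insert, Finset.mem_singleton] at hmem1 hmem2
    have e1 : q.1 = p.1 := by
      rcases hmem1 with h|h|h
      · exfalso; rw [h] at hq1; exact hρ1 hq1.symm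
      · exact h
      · exfalso; rw [h, hp2] at hq1; exact hρ12 hq1.symm
    have e2 : q.2 = p.2 := by
      rcases hmem2 with h|h|h
      · exfalso; rw [h] at hq2; exact hρ2 hq2.symm
      · exfalso; rw [h, hp1] at hq2; exact hρ12 hq2
      · exact h
    exact (Prod.ext e1 e2).symm

theorem partB (ε : ℝ) (hε : 0 < ε) (N : ℕ) : ∃ n : ℕ, N ≤ n ∧ ∃ H : Finset (Finset (Fin n)),
    (∀ E ∈ H, E.card = 3) ∧
    (∃ φ : Fin n → Fin 3, ∀ E ∈ H, Set.InjOn φ ↑E) ∧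
    (∀ x : Fin n, ∃ E ∈ H, x ∈ E) ∧
    (∀ x : Fin n, (1 / 18 - ε) * (n : ℝ) ^ 2 ≤ ((H.filter (fun E => x ∈ E)).card : ℝ)) ∧
    ∃ φ θ : Fin n → Fin 3, (∀ E ∈ H, Set.InjOn φ ↑E) ∧ (∀ E ∈ H, Set.InjOn θ ↑E) ∧
      ¬ ∃ η : Equiv.Perm (Fin 3), η ∘ φ = θ := by
  classical
  set m : ℕ := max N 1 with hm
  have hm1 : 1 ≤ m := le_max_right _ _
  refine ⟨6*m, by omega, ?_⟩
  set φ : Fin (6*m) → Fin 3 :=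
    fun v => if (v:ℕ) < 2*m then 0 else if (v:ℕ) < 4*m then 1 else 2 with hφdef
  set θ : Fin (6*m) → Fin 3 :=
    fun v => if (v:ℕ) < 2*m then 0 else if (v:ℕ) < 3*m then 1 else
      if (v:ℕ) < 4*m then 2 else if (v:ℕ) < 5*m then 1 else 2 with hθdef
  set H : Finset (Finset (Fin (6*m))) :=
    Finset.univ.filter (fun E => E.card = 3 ∧
      (∀ a ∈ E, ∀ b ∈ E, φ a = φ b → a = b) ∧
      (∀ a ∈ E, ∀ b ∈ E, θ a = θ b → a = b)) with hHdef
  have hφv : ∀ v : Fin (6*m),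
      ((v:ℕ) < 2*m → φ v = 0) ∧ (2*m ≤ (v:ℕ) → (v:ℕ) < 4*m → φ v = 1) ∧
      (4*m ≤ (v:ℕ) → φ v = 2) := by
    intro v
    refine ⟨fun h => ?_, fun h1 h2 => ?_, fun h => ?_⟩ <;>
      simp only [hφdef] <;> split_ifs <;> first | rfl | omega
  have hθv : ∀ v : Fin (6*m),
      ((v:ℕ) < 2*m → θ v = 0) ∧ (2*m ≤ (v:ℕ) → (v:ℕ) < 3*m → θ v = 1) ∧
      (3*m ≤ (v:ℕ) → (v:ℕ) < 4*m → θ v = 2) ∧ (4*m ≤ (v:ℕ) → (v:ℕ) < 5*m → θ v = 1) ∧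
      (5*m ≤ (v:ℕ) → θ v = 2) := by
    intro v
    refine ⟨fun h => ?_, fun h1 h2 => ?_, fun h1 h2 => ?_, fun h1 h2 => ?_, fun h => ?_⟩ <;>
      simp only [hθdef] <;> split_ifs <;> first | rfl | omega
  have hHmem : ∀ E : Finset (Fin (6*m)), E.card = 3 →
      (∀ a ∈ E, ∀ b ∈ E, φ a = φ b → a = b) →
      (∀ a ∈ E, ∀ b ∈ E, θ a = θ b → a = b) → E ∈ H := by
    intro E h1 h2 h3
    rw [hHdef, Finset.mem_filter]
    exact ⟨Finset.mem_univ _, h1, h2, h3⟩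
  set C00 := Finset.univ.filter (fun v : Fin (6*m) => 0 ≤ (v:ℕ) ∧ (v:ℕ) < 2*m) with hC00
  set C11 := Finset.univ.filter (fun v : Fin (6*m) => 2*m ≤ (v:ℕ) ∧ (v:ℕ) < 3*m) with hC11
  set C12 := Finset.univ.filter (fun v : Fin (6*m) => 3*m ≤ (v:ℕ) ∧ (v:ℕ) < 4*m) with hC12
  set C21 := Finset.univ.filter (fun v : Fin (6*m) => 4*m ≤ (v:ℕ) ∧ (v:ℕ) < 5*m) with hC21
  set C22 := Finset.univ.filter (fun v : Fin (6*m) => 5*m ≤ (v:ℕ) ∧ (v:ℕ) < 6*m) with hC22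
  have c00 : C00.card = 2*m := by rw [hC00, K_card (by omega) (by omega)]; omega
  have c11 : C11.card = m := by rw [hC11, K_card (by omega) (by omega)]; omega
  have c12 : C12.card = m := by rw [hC12, K_card (by omega) (by omega)]; omega
  have c21 : C21.card = m := by rw [hC21, K_card (by omega) (by omega)]; omega
  have c22 : C22.card = m := by rw [hC22, K_card (by omega) (by omega)]; omega
  have hdeg : ∀ x : Fin (6*m), 2*m^2 ≤ (H.filter (fun E => x ∈ E)).card := by
    intro x
    have hx6 : (x:ℕ) < 6*m := x.isLt
    rcases lt_or_ge (x:ℕ) (2*m) with hx | hx1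
    · have hφx : φ x = 0 := (hφv x).1 hx
      have hθx : θ x = 0 := (hθv x).1 hx
      have hkey := deg_lower H φ θ hHmem x ((C11 ×ˢ C22) ∪ (C12 ×ˢ C21)) 1 2
        (by rw [hφx]; decide) (by rw [hφx]; decide) (by decide) ?_
      · refine le_trans ?_ hkey
        rw [Finset.card_union_of_disjoint, Finset.card_product, Finset.card_product,
          c11, c22, c12, c21]
        · ring_nf; omega
        · rw [Finset.disjoint_left]
          intro p hp hq
          rw [Finset.mem_product] at hp hq
          obtain ⟨hp1, -⟩ := hp
          obtain ⟨hq1, -⟩ := hq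
          rw [hC11, Finset.mem_filter] at hp1
          rw [hC12, Finset.mem_filter] at hq1
          obtain ⟨-, hp1a, hp1b⟩ := hp1
          obtain ⟨-, hq1a, hq1b⟩ := hq1
          omega
      · intro p hp
        rw [Finset.mem_union, Finset.mem_product, Finset.mem_product] at hp
        rcases hp with ⟨ha, hb⟩ | ⟨ha, hb⟩
        · rw [hC11, Finset.mem_filter] at ha
          rw [hC22, Finset.mem_filter] at hb
          obtain ⟨-, ha1, ha2⟩ := ha
          obtain ⟨-, hb1, hb2⟩ := hb
          have e1 : φ p.1 = 1 := (hφv p.1).2.1 (by omega) (by omega)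
          have e2 : φ p.2 = 2 := (hφv p.2).2.2 (by omega)
          have e3 : θ p.1 = 1 := (hθv p.1).2.1 (by omega) (by omega)
          have e4 : θ p.2 = 2 := (hθv p.2).2.2.2.2 (by omega)
          rw [e1, e2, e3, e4, hθx]
          exact ⟨rfl, rfl, by decide, by decide, by decide⟩
        · rw [hC12, Finset.mem_filter] at ha
          rw [hC21, Finset.mem_filter] at hb
          obtain ⟨-, ha1, ha2⟩ := ha
          obtain ⟨-, hb1, hb2⟩ := hb
          have e1 : φ p.1 = 1 := (hφv p.1).2.1 (by omega) (by omega)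
          have e2 : φ p.2 = 2 := (hφv p.2).2.2 (by omega)
          have e3 : θ p.1 = 2 := (hθv p.1).2.2.1 (by omega) (by omega)
          have e4 : θ p.2 = 1 := (hθv p.2).2.2.2.1 (by omega) (by omega)
          rw [e1, e2, e3, e4, hθx]
          exact ⟨rfl, rfl, by decide, by decide, by decide⟩
    · rcases lt_or_ge (x:ℕ) (3*m) with hx | hx2
      · have hφx : φ x = 1 := (hφv x).2.1 hx1 (by omega)
        have hθx : θ x = 1 := (hθv x).2.1 hx1 hx
        have hkey := deg_lower H φ θ hHmem x (C00 ×ˢ C22) 0 2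
          (by rw [hφx]; decide) (by rw [hφx]; decide) (by decide) ?_
        · refine le_trans ?_ hkey
          rw [Finset.card_product, c00, c22]; ring_nf; omega
        · intro p hp
          rw [Finset.mem_product] at hp
          obtain ⟨ha, hb⟩ := hp
          rw [hC00, Finset.mem_filter] at ha
          rw [hC22, Finset.mem_filter] at hb
          obtain ⟨-, -, ha2⟩ := ha
          obtain ⟨-, hb1, hb2⟩ := hb
          have e1 : φ p.1 = 0 := (hφv p.1).1 (by omega)
          have e2 : φ p.2 = 2 := (hφv p.2).2.2 (by omega)
          have e3 : θ p.1 = 0 := (hθv p.1).1 (by omega)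
          have e4 : θ p.2 = 2 := (hθv p.2).2.2.2.2 (by omega)
          rw [e1, e2, e3, e4, hθx]
          exact ⟨rfl, rfl, by decide, by decide, by decide⟩
      · rcases lt_or_ge (x:ℕ) (4*m) with hx | hx3
        · have hφx : φ x = 1 := (hφv x).2.1 (by omega) hx
          have hθx : θ x = 2 := (hθv x).2.2.1 hx2 hx
          have hkey := deg_lower H φ θ hHmem x (C00 ×ˢ C21) 0 2
            (by rw [hφx]; decide) (by rw [hφx]; decide) (by decide) ?_
          · refine le_trans ?_ hkey
            rw [Finset.card_product, c00, c21]; ring_nf; omega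
          · intro p hp
            rw [Finset.mem_product] at hp
            obtain ⟨ha, hb⟩ := hp
            rw [hC00, Finset.mem_filter] at ha
            rw [hC21, Finset.mem_filter] at hb
            obtain ⟨-, -, ha2⟩ := ha
            obtain ⟨-, hb1, hb2⟩ := hb
            have e1 : φ p.1 = 0 := (hφv p.1).1 (by omega)
            have e2 : φ p.2 = 2 := (hφv p.2).2.2 (by omega)
            have e3 : θ p.1 = 0 := (hθv p.1).1 (by omega)
            have e4 : θ p.2 = 1 := (hθv p.2).2.2.2.1 (by omega) (by omega)
            rw [e1, e2, e3, e4, hθx]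
            exact ⟨rfl, rfl, by decide, by decide, by decide⟩
        · rcases lt_or_ge (x:ℕ) (5*m) with hx | hx4
          · have hφx : φ x = 2 := (hφv x).2.2 (by omega)
            have hθx : θ x = 1 := (hθv x).2.2.2.1 hx3 hx
            have hkey := deg_lower H φ θ hHmem x (C00 ×ˢ C12) 0 1
              (by rw [hφx]; decide) (by rw [hφx]; decide) (by decide) ?_
            · refine le_trans ?_ hkey
              rw [Finset.card_product, c00, c12]; ring_nf; omega
            · intro p hp
              rw [Finset.mem_product] at hp
              obtain ⟨ha, hb⟩ := hp
              rw [hC00, Finset.mem_filter] at ha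
              rw [hC12, Finset.mem_filter] at hb
              obtain ⟨-, -, ha2⟩ := ha
              obtain ⟨-, hb1, hb2⟩ := hb
              have e1 : φ p.1 = 0 := (hφv p.1).1 (by omega)
              have e2 : φ p.2 = 1 := (hφv p.2).2.1 (by omega) (by omega)
              have e3 : θ p.1 = 0 := (hθv p.1).1 (by omega)
              have e4 : θ p.2 = 2 := (hθv p.2).2.2.1 (by omega) (by omega)
              rw [e1, e2, e3, e4, hθx]
              exact ⟨rfl, rfl, by decide, by decide, by decide⟩
          · have hφx : φ x = 2 := (hφv x).2.2 (by omega)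
            have hθx : θ x = 2 := (hθv x).2.2.2.2 hx4
            have hkey := deg_lower H φ θ hHmem x (C00 ×ˢ C11) 0 1
              (by rw [hφx]; decide) (by rw [hφx]; decide) (by decide) ?_
            · refine le_trans ?_ hkey
              rw [Finset.card_product, c00, c11]; ring_nf; omega
            · intro p hp
              rw [Finset.mem_product] at hp
              obtain ⟨ha, hb⟩ := hp
              rw [hC00, Finset.mem_filter] at ha
              rw [hC11, Finset.mem_filter] at hb
              obtain ⟨-, -, ha2⟩ := ha
              obtain ⟨-, hb1, hb2⟩ := hb
              have e1 : φ p.1 = 0 := (hφv p.1).1 (by omega)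
              have e2 : φ p.2 = 1 := (hφv p.2).2.1 (by omega) (by omega)
              have e3 : θ p.1 = 0 := (hθv p.1).1 (by omega)
              have e4 : θ p.2 = 1 := (hθv p.2).2.1 (by omega) (by omega)
              rw [e1, e2, e3, e4, hθx]
              exact ⟨rfl, rfl, by decide, by decide, by decide⟩
  have hφproper : ∀ E ∈ H, Set.InjOn φ ↑E := by
    intro E hE
    rw [hHdef, Finset.mem_filter] at hE
    intro a ha b hb hab
    exact hE.2.2.1 a ha b hb hab
  have hθproper : ∀ E ∈ H, Set.InjOn θ ↑E := by
    intro E hE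
    rw [hHdef, Finset.mem_filter] at hE
    intro a ha b hb hab
    exact hE.2.2.2 a ha b hb hab
  refine ⟨H, ?_, ⟨φ, hφproper⟩, ?_, ?_, φ, θ, hφproper, hθproper, ?_⟩
  · intro E hE
    rw [hHdef, Finset.mem_filter] at hE
    exact hE.2.1
  · intro x
    have h2 := hdeg x
    have hne : (H.filter (fun E => x ∈ E)).Nonempty := by
      rw [← Finset.card_pos]
      have : 0 < 2*m^2 := by positivity
      omega
    obtain ⟨E, hE⟩ := hne
    rw [Finset.mem_filter] at hE
    exact ⟨E, hE.1, hE.2⟩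
  · intro x
    have h2 := hdeg x
    have hcast : (2*(m:ℝ)^2) ≤ ((H.filter (fun E => x ∈ E)).card : ℝ) := by
      exact_mod_cast h2
    have hn : ((6*m : ℕ) : ℝ) = 6*(m:ℝ) := by push_cast; ring
    rw [hn]
    have hmR : (1:ℝ) ≤ (m:ℝ) := by exact_mod_cast hm1
    nlinarith [mul_pos hε (mul_pos (by linarith : (0:ℝ) < (m:ℝ)) (by linarith : (0:ℝ) < (m:ℝ)))]
  · rintro ⟨η, hη⟩
    have hlt1 : 2*m < 6*m := by omega
    have hlt2 : 3*m < 6*m := by omega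
    have hval1 : ((⟨2*m, hlt1⟩ : Fin (6*m)) : ℕ) = 2*m := rfl
    have hval2 : ((⟨3*m, hlt2⟩ : Fin (6*m)) : ℕ) = 3*m := rfl
    have hv1 : φ ⟨2*m, hlt1⟩ = 1 := (hφv _).2.1 (by omega) (by omega)
    have hv1' : θ ⟨2*m, hlt1⟩ = 1 := (hθv _).2.1 (by omega) (by omega)
    have hv2 : φ ⟨3*m, hlt2⟩ = 1 := (hφv _).2.1 (by omega) (by omega)
    have hv2' : θ ⟨3*m, hlt2⟩ = 2 := (hθv _).2.2.1 (by omega) (by omega)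
    have e1 : η 1 = 1 := by
      have hc := congrFun hη ⟨2*m, hlt1⟩
      simp only [Function.comp_apply, hv1, hv1'] at hc
      exact hc
    have e2 : η 1 = 2 := by
      have hc := congrFun hη ⟨3*m, hlt2⟩
      simp only [Function.comp_apply, hv2, hv2'] at hc
      exact hc
    rw [e1] at e2
    exact absurd e2 (by decide)

/-- Φ_{3,3,1} = 1/18: (a) every n-vertex (n ≥ 3) 3-partite 3-graph with no isolated
vertices and all vertex degrees > n²/18 is uniquely 3-colorable; (b) for every ε > 0
there are arbitrarily large 3-partite 3-graphs with no isolated vertices, all vertex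
degrees ≥ (1/18 - ε)·n², that are not uniquely 3-colorable. -/
theorem stmt14 :
    (∀ n : ℕ, 3 ≤ n → ∀ H : Finset (Finset (Fin n)),
      (∀ E ∈ H, E.card = 3) →
      (∃ φ : Fin n → Fin 3, ∀ E ∈ H, Set.InjOn φ ↑E) →
      (∀ x : Fin n, ∃ E ∈ H, x ∈ E) →
      (∀ x : Fin n, (n : ℝ) ^ 2 / 18 < ((H.filter (fun E => x ∈ E)).card : ℝ)) →
      ∀ φ θ : Fin n → Fin 3, (∀ E ∈ H, Set.InjOn φ ↑E) → (∀ E ∈ H, Set.InjOn θ ↑E) →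
        ∃ η : Equiv.Perm (Fin 3), η ∘ φ = θ) ∧
    (∀ ε : ℝ, 0 < ε → ∀ N : ℕ, ∃ n : ℕ, N ≤ n ∧ ∃ H : Finset (Finset (Fin n)),
      (∀ E ∈ H, E.card = 3) ∧
      (∃ φ : Fin n → Fin 3, ∀ E ∈ H, Set.InjOn φ ↑E) ∧
      (∀ x : Fin n, ∃ E ∈ H, x ∈ E) ∧
      (∀ x : Fin n, (1 / 18 - ε) * (n : ℝ) ^ 2 ≤ ((H.filter (fun E => x ∈ E)).card : ℝ)) ∧
      ∃ φ θ : Fin n → Fin 3, (∀ E ∈ H, Set.InjOn φ ↑E) ∧ (∀ E ∈ H, Set.InjOn θ ↑E) ∧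
        ¬ ∃ η : Equiv.Perm (Fin 3), η ∘ φ = θ) := by
  constructor
  · intro n hn H hcard _ hcover hdeg φ θ hφ hθ
    exact partA n hn H hcard hcover hdeg φ θ hφ hθ
  · intro ε hε N
    exact partB ε hε N
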